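/- For every k ≥ 1 and r ≥ 1, the sum of the first k terms of the ruler sequence is at most the sum of any k consecutive terms starting at position r: ∑_{i=1}^{k} s_i ≤ ∑_{i=r}^{r+k-1} s_i. -/

import Mathlib

/-- The ruler sequence: `s i = v₂(i) + 1`. -/
def rulerSeq (i : ℕ) : ℕ := padicValNat 2 i + 1

lemma sum_ruler_eq (n : ℕ) :
    ∑ i ∈ Finset.Icc 1 n, rulerSeq i = n + padicValNat 2 n.factorial := by
  induction n with
  | zero => simp [Nat.factorial]
  | succ n ih =>
    rw [Finset.sum_Icc_succ_top (by omega), ih, Nat.factorial_succ, rulerSeq,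
      padicValNat.mul (by omega) (Nat.factorial_ne_zero n)]
    ring

lemma v2_le_of_dvd {a b : ℕ} (h : a ∣ b) (hb : b ≠ 0) :
    padicValNat 2 a ≤ padicValNat 2 b := by
  haveI : Fact (Nat.Prime 2) := ⟨Nat.prime_two⟩
  rcases Nat.eq_zero_or_pos a with rfl | ha
  · exact absurd (zero_dvd_iff.mp h) hb
  · exact (padicValNat_dvd_iff_le hb).mp ((pow_padicValNat_dvd).trans h)

theorem ruler_prefix_sum_minimal (k r : ℕ) (hk : 1 ≤ k) (hr : 1 ≤ r) :
    ∑ i ∈ Finset.Icc 1 k, rulerSeq i ≤ ∑ i ∈ Finset.Icc r (r + k - 1), rulerSeq i := by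
  haveI : Fact (Nat.Prime 2) := ⟨Nat.prime_two⟩
  have hsplit : ∑ i ∈ Finset.Icc 1 (r - 1), rulerSeq i
      + ∑ i ∈ Finset.Icc r (r + k - 1), rulerSeq i
      = ∑ i ∈ Finset.Icc 1 (r + k - 1), rulerSeq i := by
    have e1 : Finset.Icc 1 (r - 1) = Finset.Ioc 0 (r - 1) := by
      rw [← Finset.Icc_add_one_left_eq_Ioc, zero_add]
    have e2 : Finset.Icc r (r + k - 1) = Finset.Ioc (r - 1) (r + k - 1) := by
      rw [← Finset.Icc_add_one_left_eq_Ioc]; congr 1; omega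
    have e3 : Finset.Icc 1 (r + k - 1) = Finset.Ioc 0 (r + k - 1) := by
      rw [← Finset.Icc_add_one_left_eq_Ioc, zero_add]
    rw [e1, e2, e3, ← Finset.sum_union (by simp only [Finset.disjoint_left, Finset.mem_Ioc]; omega),
      Finset.Ioc_union_Ioc_eq_Ioc (by omega) (by omega)]
  have hdvd : (r - 1).factorial * k.factorial ∣ (r + k - 1).factorial := by
    have := Nat.factorial_mul_factorial_dvd_factorial_add (r - 1) k
    rwa [show r - 1 + k = r + k - 1 by omega] at this
  have hv : padicValNat 2 (r - 1).factorial + padicValNat 2 k.factorial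
      ≤ padicValNat 2 (r + k - 1).factorial := by
    have := v2_le_of_dvd hdvd (Nat.factorial_ne_zero _)
    rwa [padicValNat.mul (Nat.factorial_ne_zero _) (Nat.factorial_ne_zero _)] at this
  have h1 := sum_ruler_eq k
  have h2 := sum_ruler_eq (r - 1)
  have h3 := sum_ruler_eq (r + k - 1)
  omega
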